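/- For every real time t, the quantum resources of the evolved state are determined by the quantum state texture of the battery state via: E(t) = 2√(1/2 − T_tr(t)²), C₁(t) = 2√(1/2 − T_tr(t)²), S(t) = 4 − 8 T_tr(t)², and B(t) = 2√(3 − 4 T_tr(t)²) − 2. -/

import Mathlib

open Complex Matrix

set_option maxHeartbeats 1000000

section

open scoped ComplexOrder

/-- The square root of a positive semidefinite matrix, as `Matrix.PosSemidef.sqrt` was defined
in Mathlib (December 2024); that declaration has since been removed. -/
noncomputable def Matrix.PosSemidef.sqrt {n 𝕜 : Type*} [Fintype n] [DecidableEq n] [RCLike 𝕜]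
    {A : Matrix n n 𝕜} (hA : A.PosSemidef) : Matrix n n 𝕜 :=
  hA.1.eigenvectorUnitary.1 * diagonal ((↑) ∘ (√·) ∘ hA.1.eigenvalues) *
    (star hA.1.eigenvectorUnitary : Matrix n n 𝕜)

end

lemma key_sum (u v : ℂ) (hu : Complex.normSq u = 1) (hv : Complex.normSq v = 1)
    (x y : ℝ) (hprod : x * y = -1) (hne : x ≠ y) :
    Complex.normSq ((u * x - v * y) / ((x:ℂ) - y)) +
      Complex.normSq ((u - v) / ((x:ℂ) - y)) = 1 := by
  have hd : ((x:ℂ) - y) = ((x - y : ℝ) : ℂ) := by push_cast; ring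
  have hdn : (x - y) ≠ 0 := sub_ne_zero.mpr hne
  rw [Complex.normSq_div, Complex.normSq_div, hd, Complex.normSq_ofReal]
  rw [← add_div, div_eq_one_iff_eq (by positivity)]
  simp only [Complex.normSq_apply, Complex.sub_re, Complex.sub_im, Complex.mul_re,
    Complex.mul_im, Complex.ofReal_re, Complex.ofReal_im] at *
  linear_combination (x^2)*hu + (y^2)*hv + hu + hv -
    2*(u.re*v.re+u.im*v.im)*hprod + 2*hprod

theorem stmt_16 (ωb ωc J1 J2 t : ℝ) (hωb : 0 < ωb) (hωc : 0 < ωc) (hJ1 : J1 ≠ 0)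
    (Δ Ω e1 e2 ξ1 ξ2 p : ℝ) (α β : ℂ)
    (hΔ : Δ = ωb - ωc) (hΩ : Ω = Real.sqrt (J1 ^ 2 + Δ ^ 2))
    (he1 : e1 = Ω - J2) (he2 : e2 = -Ω - J2)
    (hξ1 : ξ1 = (Δ + Ω) / J1) (hξ2 : ξ2 = (Δ - Ω) / J1)
    (hα : α = (Complex.exp (-Complex.I * ((e1 * t : ℝ) : ℂ)) * (ξ1 : ℂ) -
        Complex.exp (-Complex.I * ((e2 * t : ℝ) : ℂ)) * (ξ2 : ℂ)) / ((ξ1 : ℂ) - (ξ2 : ℂ)))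
    (hβ : β = (Complex.exp (-Complex.I * ((e1 * t : ℝ) : ℂ)) -
        Complex.exp (-Complex.I * ((e2 * t : ℝ) : ℂ))) / ((ξ1 : ℂ) - (ξ2 : ℂ)))
    (hp : p = ‖α‖ ^ 2)
    (ρb f1 : Matrix (Fin 2) (Fin 2) ℝ)
    (hρb : ρb = !![p, 0; 0, 1 - p])
    (hf1 : f1 = (1 / 2 : ℝ) • !![1, 1; 1, 1])
    (hA : ((ρb - f1) * (ρb - f1)ᵀ).PosSemidef)
    (Ttr : ℝ) (hTtr : Ttr = (1 / 2) * hA.sqrt.trace)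
    (E C1 S B : ℝ)
    (hE : E = 2 * ‖α‖ * ‖β‖)
    (hC1 : C1 = 2 * ‖α‖ * ‖β‖)
    (hS : S = 8 * ‖α‖ ^ 2 * ‖β‖ ^ 2)
    (hB : B = 2 * Real.sqrt (1 + 4 * ‖α‖ ^ 2 * ‖β‖ ^ 2) - 2) :
    E = 2 * Real.sqrt (1 / 2 - Ttr ^ 2) ∧
    C1 = 2 * Real.sqrt (1 / 2 - Ttr ^ 2) ∧
    S = 4 - 8 * Ttr ^ 2 ∧
    B = 2 * Real.sqrt (3 - 4 * Ttr ^ 2) - 2 := by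
  -- basic facts about Ω and ξ's
  have hJ1sq : 0 < J1 ^ 2 := by positivity
  have hΩsq : Ω ^ 2 = J1 ^ 2 + Δ ^ 2 := by
    rw [hΩ]; exact Real.sq_sqrt (by positivity)
  have hΩpos : 0 < Ω := by
    nlinarith [Real.sqrt_nonneg (J1 ^ 2 + Δ ^ 2), hΩ]
  have hprod : ξ1 * ξ2 = -1 := by
    rw [hξ1, hξ2]; field_simp; nlinarith [hΩsq]
  have hne : ξ1 ≠ ξ2 := by
    rw [hξ1, hξ2]
    intro h
    rw [div_eq_div_iff hJ1 hJ1] at h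
    have : Ω = 0 := by nlinarith [h]
    linarith
  -- norm-one of the exponentials
  have hexp : ∀ r : ℝ, Complex.normSq (Complex.exp (-Complex.I * (r : ℂ))) = 1 := by
    intro r
    rw [← Complex.sq_norm, Complex.norm_exp]
    have : (-Complex.I * (r : ℂ)).re = 0 := by simp
    rw [this, Real.exp_zero, one_pow]
  -- |α|² + |β|² = 1
  have hsum : ‖α‖ ^ 2 + ‖β‖ ^ 2 = 1 := by
    rw [Complex.sq_norm, Complex.sq_norm, hα, hβ]
    exact key_sum _ _ (hexp _) (hexp _) ξ1 ξ2 hprod hne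
  have hβ2 : ‖β‖ ^ 2 = 1 - p := by rw [hp]; linarith
  -- square root of the matrix
  set r : ℝ := Real.sqrt ((p - 1/2) ^ 2 + 1/4) with hr
  have hr2 : r ^ 2 = (p - 1/2) ^ 2 + 1/4 := Real.sq_sqrt (by positivity)
  have hrnn : 0 ≤ r := Real.sqrt_nonneg _
  have hB0 : (Matrix.diagonal (fun _ => r) : Matrix (Fin 2) (Fin 2) ℝ).PosSemidef :=
    Matrix.PosSemidef.diagonal (fun _ => hrnn)
  have hM : ρb - f1 = !![p - 1/2, -1/2; -1/2, 1/2 - p] := by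
    rw [hρb, hf1]
    ext i j
    fin_cases i <;> fin_cases j <;> simp <;> ring
  have hMT : (!![p - 1/2, -1/2; -1/2, 1/2 - p] : Matrix (Fin 2) (Fin 2) ℝ)ᵀ =
      !![p - 1/2, -1/2; -1/2, 1/2 - p] := by
    ext i j
    fin_cases i <;> fin_cases j <;> rfl
  have hsq : (Matrix.diagonal (fun _ => r) : Matrix (Fin 2) (Fin 2) ℝ) ^ 2 =
      (ρb - f1) * (ρb - f1)ᵀ := by
    rw [pow_two, Matrix.diagonal_mul_diagonal, hM, hMT]
    ext i j
    fin_cases i <;> fin_cases j <;>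
      simp [Matrix.mul_apply, Fin.sum_univ_two, Matrix.diagonal] <;>
      nlinarith [hr2]
  have hsqrt : hA.sqrt = Matrix.diagonal (fun _ => r) := by
    have h1 : hA.sqrt = cfc Real.sqrt ((ρb - f1) * (ρb - f1)ᵀ) := by
      rw [hA.1.cfc_eq Real.sqrt, Matrix.IsHermitian.cfc, Unitary.conjStarAlgAut_apply]; rfl
    have h2 : (ρb - f1) * (ρb - f1)ᵀ = algebraMap ℝ _ (r ^ 2) := by
      rw [← hsq, pow_two, Matrix.diagonal_mul_diagonal, Matrix.algebraMap_eq_diagonal]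
      congr 1; ext i; simp [pow_two]
    rw [h1, h2, cfc_algebraMap, Real.sqrt_sq hrnn]; rfl
  have htr : hA.sqrt.trace = 2 * r := by
    rw [hsqrt, Matrix.trace_diagonal]
    rw [Fin.sum_univ_two]; ring
  have hT : Ttr = r := by rw [hTtr, htr]; ring
  have hT2 : Ttr ^ 2 = (p - 1/2) ^ 2 + 1/4 := by rw [hT, hr2]
  -- key algebraic identity
  have hkey : ‖α‖ ^ 2 * ‖β‖ ^ 2 = 1/2 - Ttr ^ 2 := by
    rw [← hp, hβ2, hT2]; ring
  have habmul : ‖α‖ * ‖β‖ = Real.sqrt (1/2 - Ttr ^ 2) := by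
    rw [← hkey, ← mul_pow]
    exact (Real.sqrt_sq (by positivity)).symm
  have hin : 1 + 4 * ‖α‖ ^ 2 * ‖β‖ ^ 2 = 3 - 4 * Ttr ^ 2 := by
    linear_combination 4 * hkey
  refine ⟨?_, ?_, ?_, ?_⟩
  · rw [hE]; linear_combination 2 * habmul
  · rw [hC1]; linear_combination 2 * habmul
  · rw [hS]; linear_combination 8 * hkey
  · rw [hB, hin]
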